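/- Fix constants η > 0 and p ≤ 1/2, d = pn. With probability at least 1 - O(n^{-η}) over G ~ G(n,p), every subgraph S of G with |V(S)| ≤ (n/d)^{1/3} satisfies |E(S)| ≤ 3|V(S)|·log_{1/p}(n) + 3η·log_{1/p}(n). -/

import Mathlib

open MeasureTheory
open scoped ENNReal

/-- The Bernoulli(p) measure on `Bool` (with `p` clamped into `[0,1]`). -/
noncomputable def bern (p : ℝ) : Measure Bool :=
  (PMF.bernoulli (min (Real.toNNReal p) 1) (min_le_right _ _)).toMeasure

/-- The Erdős–Rényi measure `G(n,p)`: each non-diagonal pair is an edge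
independently with probability `p`. -/
noncomputable def ERMeasure (n : ℕ) (p : ℝ) :
    Measure ({e : Sym2 (Fin n) // ¬e.IsDiag} → Bool) :=
  Measure.pi fun _ => bern p

/-- Number of edges of the graph `ω` induced on the vertex set `A`. -/
noncomputable def inducedEdgeCount (n : ℕ) (ω : {e : Sym2 (Fin n) // ¬e.IsDiag} → Bool)
    (A : Finset (Fin n)) : ℕ :=
  Set.ncard {e : {e : Sym2 (Fin n) // ¬e.IsDiag} | ω e = true ∧ ∀ x ∈ e.1, x ∈ A}

section Aux

variable {n : ℕ} {p : ℝ}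

instance bernProb (p : ℝ) : IsProbabilityMeasure (bern p) :=
  PMF.toMeasure.isProbabilityMeasure _

lemma bern_true (hp1 : p ≤ 1) : bern p {true} = ENNReal.ofReal p := by
  rw [bern, PMF.toMeasure_apply_singleton _ _ (measurableSet_singleton _)]
  have : min (Real.toNNReal p) 1 = Real.toNNReal p :=
    min_eq_left (Real.toNNReal_le_one.2 hp1)
  simp [PMF.bernoulli_apply, this, ENNReal.ofReal]

lemma cylinder_measure (hp1 : p ≤ 1) (S : Finset {e : Sym2 (Fin n) // ¬e.IsDiag}) :
    ERMeasure n p {ω | ∀ e ∈ S, ω e = true} = (ENNReal.ofReal p) ^ S.card := by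
  classical
  have hset : {ω : {e : Sym2 (Fin n) // ¬e.IsDiag} → Bool | ∀ e ∈ S, ω e = true}
      = Set.pi Set.univ (fun e => if e ∈ S then ({true} : Set Bool) else Set.univ) := by
    ext ω
    simp only [Set.mem_setOf_eq, Set.mem_pi, Set.mem_univ, forall_true_left]
    constructor
    · intro h e
      by_cases he : e ∈ S
      · simp [he, h e he]
      · simp [he]
    · intro h e he
      have := h e
      simpa [he] using this
  rw [ERMeasure, hset, Measure.pi_pi]
  have : ∀ e : {e : Sym2 (Fin n) // ¬e.IsDiag},
      bern p (if e ∈ S then ({true} : Set Bool) else Set.univ)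
        = if e ∈ S then ENNReal.ofReal p else 1 := by
    intro e
    by_cases he : e ∈ S
    · rw [if_pos he, if_pos he, bern_true hp1]
    · rw [if_neg he, if_neg he]; exact measure_univ
  simp_rw [this]
  rw [Finset.prod_ite_mem, Finset.univ_inter, Finset.prod_const]

open Classical in
/-- The non-diagonal pairs inside `A`. -/
noncomputable def edgesIn (n : ℕ) (A : Finset (Fin n)) :
    Finset {e : Sym2 (Fin n) // ¬e.IsDiag} :=
  Finset.univ.filter (fun e => ∀ x ∈ e.1, x ∈ A)

lemma inducedEdgeCount_eq (ω : {e : Sym2 (Fin n) // ¬e.IsDiag} → Bool) (A : Finset (Fin n)) :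
    inducedEdgeCount n ω A = ((edgesIn n A).filter (fun e => ω e = true)).card := by
  classical
  rw [inducedEdgeCount, ← Set.ncard_coe_finset]
  congr 1
  ext e
  simp [edgesIn, and_comm]

lemma mem_of_sym2 (e : Sym2 (Fin n)) : e.inf ∈ e ∧ e.sup ∈ e := by
  induction e using Sym2.ind with
  | _ a b =>
    constructor
    · rcases min_cases a b with ⟨h, _⟩ | ⟨h, _⟩ <;>
        simp [Sym2.inf_mk, h, Sym2.mem_iff]
    · rcases max_cases a b with ⟨h, _⟩ | ⟨h, _⟩ <;>
        simp [Sym2.sup_mk, h, Sym2.mem_iff]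

lemma edgesIn_card_le (A : Finset (Fin n)) : (edgesIn n A).card ≤ A.card ^ 2 := by
  classical
  have h := Finset.card_le_card_of_injOn
    (f := fun e : {e : Sym2 (Fin n) // ¬e.IsDiag} => ((e : Sym2 (Fin n)).inf, (e : Sym2 (Fin n)).sup))
    (s := edgesIn n A) (t := A ×ˢ A) ?_ ?_
  · simpa [sq] using h
  · intro e he
    simp only [Finset.mem_coe] at he ⊢
    rw [edgesIn, Finset.mem_filter] at he
    exact Finset.mem_product.2 ⟨he.2 _ (mem_of_sym2 (e : Sym2 (Fin n))).1,
      he.2 _ (mem_of_sym2 (e : Sym2 (Fin n))).2⟩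
  · intro e _ e' _ h
    have : Sym2.sortEquiv (e : Sym2 (Fin n)) = Sym2.sortEquiv (e' : Sym2 (Fin n)) :=
      Subtype.ext (by simpa [Sym2.sortEquiv] using h)
    exact Subtype.ext (Sym2.sortEquiv.injective this)

lemma fail_subset (A : Finset (Fin n)) (k : ℕ) :
    {ω : {e : Sym2 (Fin n) // ¬e.IsDiag} → Bool | k ≤ inducedEdgeCount n ω A}
      ⊆ ⋃ E ∈ (edgesIn n A).powersetCard k, {ω | ∀ e ∈ E, ω e = true} := by
  classical
  intro ω hω
  rw [Set.mem_setOf_eq, inducedEdgeCount_eq] at hω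
  obtain ⟨E, hE, hcard⟩ := Finset.exists_subset_card_eq hω
  refine Set.mem_iUnion₂.2 ⟨E, ?_, ?_⟩
  · exact Finset.mem_powersetCard.2 ⟨hE.trans (Finset.filter_subset _ _), hcard⟩
  · intro e he
    exact (Finset.mem_filter.1 (hE he)).2

lemma measure_fail_le (hp1 : p ≤ 1) (A : Finset (Fin n)) (k : ℕ) :
    ERMeasure n p {ω | k ≤ inducedEdgeCount n ω A}
      ≤ ((edgesIn n A).card.choose k : ℝ≥0∞) * (ENNReal.ofReal p) ^ k := by
  classical
  calc ERMeasure n p {ω | k ≤ inducedEdgeCount n ω A}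
      ≤ ERMeasure n p (⋃ E ∈ (edgesIn n A).powersetCard k, {ω | ∀ e ∈ E, ω e = true}) :=
        measure_mono (fail_subset A k)
    _ ≤ ∑ E ∈ (edgesIn n A).powersetCard k, ERMeasure n p {ω | ∀ e ∈ E, ω e = true} :=
        measure_biUnion_finset_le _ _
    _ = ∑ E ∈ (edgesIn n A).powersetCard k, (ENNReal.ofReal p) ^ k := by
        refine Finset.sum_congr rfl fun E hE => ?_
        rw [cylinder_measure hp1, (Finset.mem_powersetCard.1 hE).2]
    _ = ((edgesIn n A).card.choose k : ℝ≥0∞) * (ENNReal.ofReal p) ^ k := by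
        rw [Finset.sum_const, Finset.card_powersetCard, nsmul_eq_mul]

lemma key_real (η : ℝ) (hη : 0 < η) (hn : 1 ≤ n) (hp : 0 < p) (hp1 : p < 1)
    (a N : ℕ) (hN : N ≤ a ^ 2) (ha : (a : ℝ) ≤ (1 / p) ^ ((1 : ℝ) / 3)) :
    (N.choose (⌊3 * a * Real.logb (1 / p) n + 3 * η * Real.logb (1 / p) n⌋₊ + 1) : ℝ)
      * p ^ (⌊3 * a * Real.logb (1 / p) n + 3 * η * Real.logb (1 / p) n⌋₊ + 1)
    ≤ (n : ℝ) ^ (-((a : ℝ) + η)) := by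
  set L : ℝ := Real.logb (1 / p) n with hL
  set T : ℝ := 3 * a * L + 3 * η * L with hT
  set k : ℕ := ⌊T⌋₊ + 1 with hk
  have hb : (1 : ℝ) < 1 / p := (one_lt_one_div hp hp1)
  have hLpos : 0 ≤ L := Real.logb_nonneg hb (by exact_mod_cast hn)
  have hTk : T ≤ (k : ℕ) := by
    push_cast [hk]
    exact (Nat.lt_floor_add_one T).le
  -- step 1 : choose ≤ (a^2)^k, so LHS ≤ (a^2*p)^k
  have h1 : (N.choose k : ℝ) * p ^ k ≤ ((a : ℝ) ^ 2 * p) ^ k := by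
    rw [mul_pow, ← Nat.cast_pow, ← Nat.cast_pow]
    refine mul_le_mul_of_nonneg_right ?_ (by positivity)
    exact_mod_cast (Nat.choose_le_pow N k).trans (Nat.pow_le_pow_left hN k)
  -- step 2 : a^2 * p ≤ p ^ (1/3)
  have h2 : (a : ℝ) ^ 2 * p ≤ p ^ ((1 : ℝ) / 3) := by
    have ha2 : (a : ℝ) ^ 2 ≤ ((1 / p) ^ ((1 : ℝ) / 3)) ^ 2 := by
      apply pow_le_pow_left₀ (by positivity) ha
    have hr : ((1 / p) ^ ((1 : ℝ) / 3)) ^ 2 * p = p ^ ((1 : ℝ) / 3) := by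
      rw [one_div, ← Real.rpow_natCast ((p⁻¹) ^ ((1:ℝ)/3)) 2, ← Real.rpow_mul (by positivity),
        Real.inv_rpow hp.le, ← Real.rpow_neg hp.le]
      nth_rewrite 2 [show p = p ^ (1 : ℝ) by rw [Real.rpow_one]]
      rw [← Real.rpow_add hp]
      norm_num
    calc (a : ℝ) ^ 2 * p ≤ ((1 / p) ^ ((1 : ℝ) / 3)) ^ 2 * p :=
          mul_le_mul_of_nonneg_right ha2 hp.le
      _ = p ^ ((1 : ℝ) / 3) := hr
  have h3 : ((a : ℝ) ^ 2 * p) ^ k ≤ (p ^ ((1 : ℝ) / 3)) ^ k :=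
    pow_le_pow_left₀ (by positivity) h2 k
  -- step 3 : (p^{1/3})^k = p^{k/3} ≤ p^{T/3} = p^{(a+η)L}
  have h4 : (p ^ ((1 : ℝ) / 3)) ^ k = p ^ (((1 : ℝ) / 3) * k) := by
    rw [← Real.rpow_natCast (p ^ ((1:ℝ)/3)) k, ← Real.rpow_mul hp.le]
  have h5 : p ^ (((1 : ℝ) / 3) * k) ≤ p ^ (L * ((a : ℝ) + η)) := by
    apply Real.rpow_le_rpow_of_exponent_ge hp hp1.le
    have : L * ((a : ℝ) + η) = (1 / 3) * T := by rw [hT]; ring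
    rw [this]
    have h13 : (0:ℝ) ≤ 1/3 := by norm_num
    exact mul_le_mul_of_nonneg_left hTk h13
  -- step 4 : p^L = n⁻¹
  have hlogp : Real.log p < 0 := Real.log_neg hp hp1
  have hnpos : (0 : ℝ) < n := by exact_mod_cast hn
  have h6 : p ^ L = (n : ℝ)⁻¹ := by
    rw [hL, Real.logb, one_div, Real.log_inv, Real.rpow_def_of_pos hp]
    rw [show Real.log p * (Real.log n / -Real.log p) = -Real.log n by
      field_simp [hlogp.ne]]
    rw [Real.exp_neg, Real.exp_log hnpos]
  have h7 : p ^ (L * ((a : ℝ) + η)) = (n : ℝ) ^ (-((a : ℝ) + η)) := by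
    rw [Real.rpow_mul hp.le, h6, Real.inv_rpow hnpos.le, ← Real.rpow_neg hnpos.le]
  calc (N.choose k : ℝ) * p ^ k ≤ ((a : ℝ) ^ 2 * p) ^ k := h1
    _ ≤ (p ^ ((1 : ℝ) / 3)) ^ k := h3
    _ = p ^ (((1 : ℝ) / 3) * k) := h4
    _ ≤ p ^ (L * ((a : ℝ) + η)) := h5
    _ = (n : ℝ) ^ (-((a : ℝ) + η)) := h7

lemma sum_real_bound (η : ℝ) (hη : 0 < η) (hn : 1 ≤ n) :
    ∑ A : Finset (Fin n), (n : ℝ) ^ (-((A.card : ℝ) + η)) ≤ 3 * (n : ℝ) ^ (-η) := by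
  classical
  have hnpos : (0 : ℝ) < n := by exact_mod_cast hn
  have key : ∀ j : ℕ, ((n.choose j : ℝ)) * (n : ℝ) ^ (-((j : ℝ) + η))
      ≤ (n : ℝ) ^ (-η) / j.factorial := by
    intro j
    have h1 : (n : ℝ) ^ (-((j : ℝ) + η)) = ((n : ℝ) ^ j)⁻¹ * (n : ℝ) ^ (-η) := by
      rw [show -((j : ℝ) + η) = (-(j:ℝ)) + (-η) by ring, Real.rpow_add hnpos,
        Real.rpow_neg hnpos.le (j : ℝ), Real.rpow_natCast]
    have h2 : (n.choose j : ℝ) ≤ (n : ℝ) ^ j / j.factorial := by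
      have := Nat.choose_le_pow_div (α := ℝ) j n
      simpa using this
    rw [h1, ← mul_assoc]
    have hnj : (0 : ℝ) < (n : ℝ) ^ j := by positivity
    have h3 : (n.choose j : ℝ) * ((n : ℝ) ^ j)⁻¹ ≤ (j.factorial : ℝ)⁻¹ := by
      rw [← div_eq_mul_inv, div_le_iff₀ hnj]
      calc (n.choose j : ℝ) ≤ (n:ℝ)^j / j.factorial := h2
        _ = (j.factorial : ℝ)⁻¹ * (n:ℝ)^j := by rw [div_eq_mul_inv, mul_comm]

    calc (n.choose j : ℝ) * ((n : ℝ) ^ j)⁻¹ * (n : ℝ) ^ (-η)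
        ≤ (j.factorial : ℝ)⁻¹ * (n : ℝ) ^ (-η) :=
          mul_le_mul_of_nonneg_right h3 (Real.rpow_nonneg hnpos.le _)
      _ = (n : ℝ) ^ (-η) / j.factorial := by rw [div_eq_mul_inv]; ring
  have hsum : ∑ A : Finset (Fin n), (n : ℝ) ^ (-((A.card : ℝ) + η))
      = ∑ j ∈ Finset.range (n + 1), (n.choose j : ℝ) * (n : ℝ) ^ (-((j : ℝ) + η)) := by
    rw [← Finset.powerset_univ]
    rw [Finset.sum_powerset_apply_card (fun m => (n : ℝ) ^ (-((m : ℝ) + η)))]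
    simp [Finset.card_univ, nsmul_eq_mul]
  rw [hsum]
  calc ∑ j ∈ Finset.range (n + 1), (n.choose j : ℝ) * (n : ℝ) ^ (-((j : ℝ) + η))
      ≤ ∑ j ∈ Finset.range (n + 1), (n : ℝ) ^ (-η) / j.factorial :=
        Finset.sum_le_sum fun j _ => key j
    _ = (n : ℝ) ^ (-η) * ∑ j ∈ Finset.range (n + 1), ((1:ℝ) ^ j / j.factorial) := by
        rw [Finset.mul_sum]
        refine Finset.sum_congr rfl fun j _ => ?_
        rw [one_pow, mul_one_div]
    _ ≤ (n : ℝ) ^ (-η) * Real.exp 1 :=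
        mul_le_mul_of_nonneg_left (Real.sum_le_exp_of_nonneg zero_le_one _)
          (Real.rpow_nonneg hnpos.le _)
    _ ≤ 3 * (n : ℝ) ^ (-η) := by
        rw [mul_comm]
        have : Real.exp 1 ≤ 3 := (Real.exp_one_lt_d9.le.trans (by norm_num))
        exact mul_le_mul_of_nonneg_right this (Real.rpow_nonneg hnpos.le _)

end Aux

theorem stmt11 (η : ℝ) (hη : 0 < η) :
    ∃ C : ℝ, 0 < C ∧ ∀ n : ℕ, 1 ≤ n → ∀ p : ℝ, 0 < p → p ≤ 1 / 2 →
      ERMeasure n p {ω | ∀ A : Finset (Fin n),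
          (A.card : ℝ) ≤ ((n : ℝ) / (p * n)) ^ ((1 : ℝ) / 3) →
          (inducedEdgeCount n ω A : ℝ)
            ≤ 3 * A.card * Real.logb (1 / p) n + 3 * η * Real.logb (1 / p) n}
        ≥ 1 - ENNReal.ofReal (C * (n : ℝ) ^ (-η)) := by
  classical
  refine ⟨3, by norm_num, fun n hn p hp hp2 => ?_⟩
  have hp1 : p < 1 := lt_of_le_of_lt hp2 (by norm_num)
  have hnpos : (0 : ℝ) < n := by exact_mod_cast hn
  have hdiv : ((n : ℝ) / (p * n)) = 1 / p := by
    field_simp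
  set L : ℝ := Real.logb (1 / p) n with hLdef
  have hb : (1 : ℝ) < 1 / p := one_lt_one_div hp hp1
  have hLpos : 0 ≤ L := Real.logb_nonneg hb (by exact_mod_cast hn)
  set Good : Set ({e : Sym2 (Fin n) // ¬e.IsDiag} → Bool) :=
    {ω | ∀ A : Finset (Fin n),
      (A.card : ℝ) ≤ ((n : ℝ) / (p * n)) ^ ((1 : ℝ) / 3) →
      (inducedEdgeCount n ω A : ℝ) ≤ 3 * A.card * L + 3 * η * L} with hGood
  -- threshold
  set T : Finset (Fin n) → ℝ := fun A => 3 * A.card * L + 3 * η * L with hTdef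
  set k : Finset (Fin n) → ℕ := fun A => ⌊T A⌋₊ + 1 with hkdef
  have hT0 : ∀ A, 0 ≤ T A := by
    intro A
    have : (0:ℝ) ≤ 3 * A.card * L := by positivity
    have h2 : (0:ℝ) ≤ 3 * η * L := by positivity
    simp only [hTdef]; linarith
  -- Bad set inclusion
  set Bad : Finset (Finset (Fin n)) :=
    Finset.univ.filter (fun A => (A.card : ℝ) ≤ ((n : ℝ) / (p * n)) ^ ((1 : ℝ) / 3)) with hBad
  have hsub : Goodᶜ ⊆ ⋃ A ∈ Bad, {ω | k A ≤ inducedEdgeCount n ω A} := by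
    intro ω hω
    simp only [hGood, Set.mem_compl_iff, Set.mem_setOf_eq, not_forall] at hω
    obtain ⟨A, hA, hgt⟩ := hω
    push_neg at hgt
    refine Set.mem_iUnion₂.2 ⟨A, ?_, ?_⟩
    · rw [hBad, Finset.mem_filter]; exact ⟨Finset.mem_univ _, hA⟩
    · rw [Set.mem_setOf_eq, hkdef]
      exact Nat.succ_le_of_lt ((Nat.floor_lt (hT0 A)).2 hgt)
  -- per-A bound
  have hperA : ∀ A ∈ Bad, ERMeasure n p {ω | k A ≤ inducedEdgeCount n ω A}
      ≤ ENNReal.ofReal ((n : ℝ) ^ (-((A.card : ℝ) + η))) := by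
    intro A hA
    have hAcard : (A.card : ℝ) ≤ (1 / p) ^ ((1 : ℝ) / 3) := by
      have := (Finset.mem_filter.1 hA).2
      rwa [hdiv] at this
    calc ERMeasure n p {ω | k A ≤ inducedEdgeCount n ω A}
        ≤ ((edgesIn n A).card.choose (k A) : ℝ≥0∞) * (ENNReal.ofReal p) ^ (k A) :=
          measure_fail_le hp1.le A (k A)
      _ = ENNReal.ofReal (((edgesIn n A).card.choose (k A) : ℝ) * p ^ (k A)) := by
          rw [ENNReal.ofReal_mul (by positivity), ENNReal.ofReal_natCast,
            ENNReal.ofReal_pow hp.le]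
      _ ≤ ENNReal.ofReal ((n : ℝ) ^ (-((A.card : ℝ) + η))) := by
          apply ENNReal.ofReal_le_ofReal
          exact key_real η hη hn hp hp1 A.card (edgesIn n A).card (edgesIn_card_le A) hAcard
  -- combine
  have hcompl : ERMeasure n p Goodᶜ ≤ ENNReal.ofReal (3 * (n : ℝ) ^ (-η)) := by
    calc ERMeasure n p Goodᶜ
        ≤ ERMeasure n p (⋃ A ∈ Bad, {ω | k A ≤ inducedEdgeCount n ω A}) := measure_mono hsub
      _ ≤ ∑ A ∈ Bad, ERMeasure n p {ω | k A ≤ inducedEdgeCount n ω A} :=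
          measure_biUnion_finset_le _ _
      _ ≤ ∑ A ∈ Bad, ENNReal.ofReal ((n : ℝ) ^ (-((A.card : ℝ) + η))) :=
          Finset.sum_le_sum hperA
      _ ≤ ∑ A : Finset (Fin n), ENNReal.ofReal ((n : ℝ) ^ (-((A.card : ℝ) + η))) :=
          Finset.sum_le_sum_of_subset (Finset.filter_subset _ _)
      _ = ENNReal.ofReal (∑ A : Finset (Fin n), (n : ℝ) ^ (-((A.card : ℝ) + η))) := by
          rw [ENNReal.ofReal_sum_of_nonneg]
          intro A _
          positivity
      _ ≤ ENNReal.ofReal (3 * (n : ℝ) ^ (-η)) :=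
          ENNReal.ofReal_le_ofReal (sum_real_bound η hη hn)
  -- conclude
  have hprob : IsProbabilityMeasure (ERMeasure n p) := by
    rw [ERMeasure]; infer_instance
  have h1 : (1 : ℝ≥0∞) ≤ ERMeasure n p Good + ERMeasure n p Goodᶜ := by
    rw [← measure_univ (μ := ERMeasure n p), ← Set.union_compl_self Good]
    exact measure_union_le _ _
  rw [ge_iff_le, tsub_le_iff_right]
  exact h1.trans (add_le_add le_rfl hcompl)
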